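/- Under the setup and Assumptions A4 and A5, let μ₀ : ℝ^p × ℝ^q → ℝ be any measurable function with μ₀(L*, L) square-integrable under μ, and let ε₁, ξ : ℝ^p × ℝ → ℝ be measurable functions such that, under μ(·|{A = 1, R = 1}), ε₁(L*, Y) is a version of E[E | σ(L*, Y)] and ξ(L*, Y) is a version of E[E·μ₀(L*, L) | σ(L*, Y)]. Then E[A·R·E/η₁(L*)] = E[A·ε₁(L*, Y)] and E[(A·R·E/η₁(L*))·(Y − μ₀(L*, L))] = E[A·(ε₁(L*, Y)·Y − ξ(L*, Y))]. -/

import Mathlib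

open MeasureTheory ProbabilityTheory
open scoped ENNReal ProbabilityTheory

set_option linter.unusedVariables false
set_option maxHeartbeats 2000000

private lemma aux_bdd_integrable {Ω : Type*} [MeasurableSpace Ω] {ρ : Measure Ω}
    [IsFiniteMeasure ρ] {f : Ω → ℝ} {C : ℝ} (hf : AEStronglyMeasurable f ρ)
    (h : ∀ᵐ ω ∂ρ, |f ω| ≤ C) : Integrable f ρ :=
  ⟨hf, HasFiniteIntegral.of_bounded (C := C) (by simpa [Real.norm_eq_abs] using h)⟩

private lemma aux_mul_bd {a b c d : ℝ} (h1 : |a| ≤ c) (h2 : |b| ≤ d) : |a * b| ≤ c * d := by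
  rw [abs_mul]
  exact mul_le_mul h1 h2 (abs_nonneg _) (le_trans (abs_nonneg _) h1)

private lemma aux_lintegral_weight {Ω β : Type*} [MeasurableSpace Ω] [MeasurableSpace β]
    {μ : Measure Ω} {T : Ω → β} (hT : Measurable T) {w₁ w₂ : Ω → ℝ≥0∞}
    (hw₁ : Measurable w₁) (hw₂ : Measurable w₂)
    (hmap : (μ.withDensity w₁).map T = (μ.withDensity w₂).map T)
    {f : β → ℝ≥0∞} (hf : Measurable f) :
    ∫⁻ ω, w₁ ω * f (T ω) ∂μ = ∫⁻ ω, w₂ ω * f (T ω) ∂μ := by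
  have h1 := lintegral_withDensity_eq_lintegral_mul μ hw₁ (hf.comp hT)
  have h2 := lintegral_withDensity_eq_lintegral_mul μ hw₂ (hf.comp hT)
  simp only [Pi.mul_apply, Function.comp_apply] at h1 h2
  rw [← h1, ← h2, ← lintegral_map hf hT, ← lintegral_map hf hT, hmap]

private lemma aux_integral_weight {Ω β : Type*} [MeasurableSpace Ω] [MeasurableSpace β]
    {μ : Measure Ω} {T : Ω → β} (hT : Measurable T) {v₁ v₂ : Ω → ℝ}
    (hv₁ : Measurable v₁) (hv₂ : Measurable v₂)
    (hv₁0 : ∀ ω, 0 ≤ v₁ ω) (hv₂0 : ∀ ω, 0 ≤ v₂ ω)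
    (hmap : (μ.withDensity fun ω => ENNReal.ofReal (v₁ ω)).map T
      = (μ.withDensity fun ω => ENNReal.ofReal (v₂ ω)).map T)
    {f : β → ℝ} (hf : Measurable f)
    (hint : Integrable (fun ω => v₁ ω * f (T ω)) μ) :
    Integrable (fun ω => v₂ ω * f (T ω)) μ ∧
      ∫ ω, v₁ ω * f (T ω) ∂μ = ∫ ω, v₂ ω * f (T ω) ∂μ := by
  have hw₁ : Measurable fun ω => ENNReal.ofReal (v₁ ω) := hv₁.ennreal_ofReal
  have hw₂ : Measurable fun ω => ENNReal.ofReal (v₂ ω) := hv₂.ennreal_ofReal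
  have key : ∀ (g : β → ℝ), Measurable g →
      ∫⁻ ω, ENNReal.ofReal (v₁ ω * g (T ω)) ∂μ
        = ∫⁻ ω, ENNReal.ofReal (v₂ ω * g (T ω)) ∂μ := by
    intro g hg
    have e1 : ∀ ω, ENNReal.ofReal (v₁ ω * g (T ω))
        = ENNReal.ofReal (v₁ ω) * ENNReal.ofReal (g (T ω)) :=
      fun ω => ENNReal.ofReal_mul (hv₁0 ω)
    have e2 : ∀ ω, ENNReal.ofReal (v₂ ω * g (T ω))
        = ENNReal.ofReal (v₂ ω) * ENNReal.ofReal (g (T ω)) :=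
      fun ω => ENNReal.ofReal_mul (hv₂0 ω)
    simp_rw [e1, e2]
    exact aux_lintegral_weight hT hw₁ hw₂ hmap hg.ennreal_ofReal
  have hi₂ : Integrable (fun ω => v₂ ω * f (T ω)) μ := by
    refine ⟨(hv₂.mul (hf.comp hT)).aestronglyMeasurable, ?_⟩
    rw [hasFiniteIntegral_iff_norm]
    have e2 : ∀ ω, ENNReal.ofReal ‖v₂ ω * f (T ω)‖ = ENNReal.ofReal (v₂ ω * |f (T ω)|) := by
      intro ω; rw [Real.norm_eq_abs, abs_mul, abs_of_nonneg (hv₂0 ω)]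
    simp_rw [e2, ← key (fun b => |f b|) hf.abs]
    have e1 : ∀ ω, ENNReal.ofReal (v₁ ω * |f (T ω)|) = ENNReal.ofReal ‖v₁ ω * f (T ω)‖ := by
      intro ω; rw [Real.norm_eq_abs, abs_mul, abs_of_nonneg (hv₁0 ω)]
    simp_rw [e1, ← hasFiniteIntegral_iff_norm]
    exact hint.hasFiniteIntegral
  refine ⟨hi₂, ?_⟩
  rw [integral_eq_lintegral_pos_part_sub_lintegral_neg_part hint,
      integral_eq_lintegral_pos_part_sub_lintegral_neg_part hi₂]
  have hpos := key f hf
  have hneg : ∫⁻ ω, ENNReal.ofReal (-(v₁ ω * f (T ω))) ∂μ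
      = ∫⁻ ω, ENNReal.ofReal (-(v₂ ω * f (T ω))) ∂μ := by
    have e : ∀ (v : Ω → ℝ) (ω : Ω), -(v ω * f (T ω)) = v ω * ((fun b => -f b) (T ω)) := by
      intro v ω; ring
    simp_rw [e v₁, e v₂]
    exact key (fun b => -f b) hf.neg
  rw [hpos, hneg]

private lemma aux_pull {Ω : Type*} {m m0 : MeasurableSpace Ω} (hm : m ≤ m0)
    {ρ : Measure Ω} [IsProbabilityMeasure ρ] {h X : Ω → ℝ} (hh : StronglyMeasurable[m] h)
    (hint : Integrable (fun ω => h ω * X ω) ρ) (hX : Integrable X ρ) :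
    ∫ ω, h ω * (ρ[X|m]) ω ∂ρ = ∫ ω, h ω * X ω ∂ρ := by
  have e : ρ[h * X|m] =ᵐ[ρ] h * ρ[X|m] := condExp_mul_of_stronglyMeasurable_left hh hint hX
  calc ∫ ω, h ω * (ρ[X|m]) ω ∂ρ = ∫ ω, (ρ[h * X|m]) ω ∂ρ := (integral_congr_ae e).symm
    _ = ∫ ω, (h * X) ω ∂ρ := integral_condExp hm
    _ = ∫ ω, h ω * X ω ∂ρ := rfl

/-- Reparametrization of α(P) and β(P) through the nested nuisance functions
ε₁ and ξ conditioned on (L*, Y) among treated complete cases. -/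
theorem stmt_6
    {Ω : Type*} [𝓕 : MeasurableSpace Ω] [StandardBorelSpace Ω] [Nonempty Ω]
    (μ : Measure Ω) [IsProbabilityMeasure μ]
    {p q : ℕ}
    (Lstar : Ω → Fin p → ℝ) (L : Ω → Fin q → ℝ) (A R Y : Ω → ℝ)
    (hLstar : Measurable Lstar) (hL : Measurable L)
    (hA : Measurable A) (hR : Measurable R) (hY : Measurable Y)
    (hA01 : ∀ ω, A ω = 0 ∨ A ω = 1) (hR01 : ∀ ω, R ω = 0 ∨ R ω = 1)
    (hY2 : MemLp Y 2 μ)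
    (g : (Fin q → ℝ) → ℝ → ℝ) (hg : Measurable (Function.uncurry g))
    (hg01 : ∀ x a, g x a = 0 ∨ g x a = 1)
    -- Assumption A4 (MAR): R ⫫ (L, Y) | σ(L*, A)
    (hMAR : CondIndepFun (MeasurableSpace.comap (fun ω => (Lstar ω, A ω)) inferInstance)
      ((hLstar.prodMk hA).comap_le) R (fun ω => (L ω, Y ω)) μ)
    -- Assumption A5 (missingness positivity)
    (η : (Fin p → ℝ) → ℝ → ℝ) (hη : Measurable (Function.uncurry η))
    (hηver : (fun ω => η (Lstar ω) (A ω)) =ᵐ[μ]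
      μ[R|MeasurableSpace.comap (fun ω => (Lstar ω, A ω)) inferInstance])
    (ε₀ : ℝ) (hε₀ : 0 < ε₀)
    (hηpos : ∀ᵐ ω ∂μ, ε₀ ≤ η (Lstar ω) 0 ∧ ε₀ ≤ η (Lstar ω) 1)
    (hA1R : 0 < μ {ω | A ω = 1 ∧ R ω = 1})
    (μ₀ : (Fin p → ℝ) → (Fin q → ℝ) → ℝ) (hμ₀ : Measurable (Function.uncurry μ₀))
    (hμ₀2 : MemLp (fun ω => μ₀ (Lstar ω) (L ω)) 2 μ)
    (ε₁f ξ : (Fin p → ℝ) → ℝ → ℝ)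
    (hε₁f : Measurable (Function.uncurry ε₁f)) (hξ : Measurable (Function.uncurry ξ))
    (hε₁ver : (fun ω => ε₁f (Lstar ω) (Y ω)) =ᵐ[μ[|{ω | A ω = 1 ∧ R ω = 1}]]
      (μ[|{ω | A ω = 1 ∧ R ω = 1}])[(fun ω => g (L ω) (A ω))|MeasurableSpace.comap
          (fun ω => (Lstar ω, Y ω)) inferInstance])
    (hξver : (fun ω => ξ (Lstar ω) (Y ω)) =ᵐ[μ[|{ω | A ω = 1 ∧ R ω = 1}]]
      (μ[|{ω | A ω = 1 ∧ R ω = 1}])[(fun ω => g (L ω) (A ω) * μ₀ (Lstar ω) (L ω))|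
        MeasurableSpace.comap (fun ω => (Lstar ω, Y ω)) inferInstance]) :
    (∫ ω, A ω * R ω * g (L ω) (A ω) / η (Lstar ω) 1 ∂μ
        = ∫ ω, A ω * ε₁f (Lstar ω) (Y ω) ∂μ) ∧
    (∫ ω, (A ω * R ω * g (L ω) (A ω) / η (Lstar ω) 1) * (Y ω - μ₀ (Lstar ω) (L ω)) ∂μ
        = ∫ ω, A ω * (ε₁f (Lstar ω) (Y ω) * Y ω - ξ (Lstar ω) (Y ω)) ∂μ) := by
  classical
  have hm : MeasurableSpace.comap (fun ω => (Lstar ω, A ω)) inferInstance ≤ 𝓕 :=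
    (hLstar.prodMk hA).comap_le
  have hm' : MeasurableSpace.comap (fun ω => (Lstar ω, Y ω)) inferInstance ≤ 𝓕 :=
    (hLstar.prodMk hY).comap_le
  set S : Set Ω := {ω | A ω = 1 ∧ R ω = 1} with hS_def
  have hSmeas : MeasurableSet S :=
    (hA (measurableSet_singleton 1)).inter (hR (measurableSet_singleton 1))
  set ν : Measure Ω := μ[|S] with hν_def
  have hc0 : μ S ≠ 0 := hA1R.ne'
  have hcfin : μ S ≠ ∞ := measure_ne_top μ S
  haveI hνP : IsProbabilityMeasure ν := cond_isProbabilityMeasure hc0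
  have hν_eq : ν = (μ S)⁻¹ • μ.restrict S := by rw [hν_def]; rfl
  have hae : ∀ {P : Ω → Prop}, (∀ᵐ ω ∂μ, P ω) → (∀ᵐ ω ∂ν, P ω) := by
    intro P h
    rw [hν_eq]
    exact Measure.ae_smul_measure (ae_restrict_of_ae h) _
  have haeS : ∀ᵐ ω ∂ν, A ω = 1 ∧ R ω = 1 := by
    rw [hν_eq]
    exact Measure.ae_smul_measure (ae_restrict_mem hSmeas) _
  have hη1 : ∀ᵐ ω ∂μ, ε₀ ≤ η (Lstar ω) 1 := hηpos.mono fun ω h => h.2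
  have hη1ν : ∀ᵐ ω ∂ν, ε₀ ≤ η (Lstar ω) 1 := hae hη1
  have htoReal0 : (μ S).toReal ≠ 0 := ENNReal.toReal_ne_zero.mpr ⟨hc0, hcfin⟩
  have hSint : ∀ f : Ω → ℝ, ∫ ω in S, f ω ∂μ = (μ S).toReal * ∫ ω, f ω ∂ν := by
    intro f
    rw [hν_eq, integral_smul_measure, ENNReal.toReal_inv, smul_eq_mul, ← mul_assoc,
      mul_inv_cancel₀ htoReal0, one_mul]
  have hIntIff : ∀ f : Ω → ℝ, Integrable f ν ↔ Integrable f (μ.restrict S) := by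
    intro f
    rw [hν_eq]
    exact integrable_smul_measure (ENNReal.inv_ne_zero.mpr hcfin) (ENNReal.inv_ne_top.mpr hc0)
  -- measurability helpers
  have hη1meas : Measurable fun x : Fin p → ℝ => η x 1 :=
    hη.comp (measurable_id.prodMk measurable_const)
  have hXmeas : Measurable fun ω => g (L ω) (A ω) := hg.comp (hL.prodMk hA)
  have hε₁meas : Measurable fun ω => ε₁f (Lstar ω) (Y ω) := hε₁f.comp (hLstar.prodMk hY)
  have hξmeas : Measurable fun ω => ξ (Lstar ω) (Y ω) := hξ.comp (hLstar.prodMk hY)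
  have hμ₀meas : Measurable fun ω => μ₀ (Lstar ω) (L ω) := hμ₀.comp (hLstar.prodMk hL)
  -- the joint map
  set T : Ω → (Fin p → ℝ) × ((Fin q → ℝ) × ℝ) := fun ω => (Lstar ω, (L ω, Y ω)) with hT_def
  have hT : Measurable T := by rw [hT_def]; exact hLstar.prodMk (hL.prodMk hY)
  -- the weights
  set v₁ : Ω → ℝ := fun ω => A ω * R ω with hv₁_def
  have hv₁meas : Measurable v₁ := by rw [hv₁_def]; exact hA.mul hR
  set φm : (Fin p → ℝ) → ℝ := fun x => max (η x 1) 0 with hφm_def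
  have hφm : Measurable φm := by rw [hφm_def]; exact hη1meas.max measurable_const
  set v₂ : Ω → ℝ := fun ω => if A ω = 1 then φm (Lstar ω) else 0 with hv₂_def
  have hv₂meas : Measurable v₂ := by
    rw [hv₂_def]
    exact Measurable.ite (hA (measurableSet_singleton 1)) (hφm.comp hLstar) measurable_const
  have hv₁0 : ∀ ω, 0 ≤ v₁ ω := by
    intro ω
    rcases hA01 ω with h | h <;> rcases hR01 ω with h' | h' <;> simp [hv₁_def, h, h']
  have hv₁le1 : ∀ ω, v₁ ω ≤ 1 := by
    intro ω
    rcases hA01 ω with h | h <;> rcases hR01 ω with h' | h' <;> simp [hv₁_def, h, h']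
  have hv₂0 : ∀ ω, 0 ≤ v₂ ω := by
    intro ω
    by_cases h : A ω = 1 <;> simp [hv₂_def, h, hφm_def, le_max_right]
  have hRble : ∀ᵐ ω ∂μ, η (Lstar ω) (A ω) ≤ 1 := by
    have hRint : Integrable R μ :=
      aux_bdd_integrable hR.aestronglyMeasurable (C := 1)
        (ae_of_all _ fun ω => by rcases hR01 ω with h | h <;> simp [h])
    have h1 : μ[R|MeasurableSpace.comap (fun ω => (Lstar ω, A ω)) inferInstance]
        ≤ᵐ[μ] fun _ => (1 : ℝ) := by
      have := condExp_mono
        (m := MeasurableSpace.comap (fun ω => (Lstar ω, A ω)) inferInstance)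
        hRint (integrable_const (1 : ℝ))
        (ae_of_all _ fun ω => by rcases hR01 ω with h | h <;> simp [h])
      rwa [condExp_const hm] at this
    filter_upwards [hηver, h1] with ω h2 h3
    rw [h2]; exact h3
  have hv₂le1 : ∀ᵐ ω ∂μ, v₂ ω ≤ 1 := by
    filter_upwards [hRble] with ω h2
    by_cases h : A ω = 1
    · rw [h] at h2
      simp only [hv₂_def, if_pos h, hφm_def]
      exact max_le h2 zero_le_one
    · simp [hv₂_def, if_neg h]
  have hv₁ind : ∀ ω, v₁ ω = Set.indicator S (fun _ => (1 : ℝ)) ω := by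
    intro ω
    rcases hA01 ω with h | h <;> rcases hR01 ω with h' | h' <;>
      simp [hv₁_def, Set.indicator_apply, hS_def, h, h', Set.mem_setOf_eq]
  -- Step A : equality of the two pushforward measures
  have hmap : (μ.withDensity fun ω => ENNReal.ofReal (v₁ ω)).map T
      = (μ.withDensity fun ω => ENNReal.ofReal (v₂ ω)).map T := by
    have hfin : ∀ v : Ω → ℝ, (∀ᵐ ω ∂μ, v ω ≤ 1) → ∫⁻ ω, ENNReal.ofReal (v ω) ∂μ ≠ ⊤ := by
      intro v hv
      have hb : ∫⁻ ω, ENNReal.ofReal (v ω) ∂μ ≤ ∫⁻ _, 1 ∂μ :=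
        lintegral_mono_ae (hv.mono fun ω h => ENNReal.ofReal_le_one.mpr h)
      rw [lintegral_one] at hb
      exact (hb.trans_lt (measure_lt_top _ _)).ne
    haveI i₁ : IsFiniteMeasure (μ.withDensity fun ω => ENNReal.ofReal (v₁ ω)) :=
      isFiniteMeasure_withDensity (hfin v₁ (ae_of_all _ hv₁le1))
    haveI i₂ : IsFiniteMeasure (μ.withDensity fun ω => ENNReal.ofReal (v₂ ω)) :=
      isFiniteMeasure_withDensity (hfin v₂ hv₂le1)
    haveI j₁ : IsFiniteMeasure ((μ.withDensity fun ω => ENNReal.ofReal (v₁ ω)).map T) :=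
      Measure.isFiniteMeasure_map _ _
    haveI j₂ : IsFiniteMeasure ((μ.withDensity fun ω => ENNReal.ofReal (v₂ ω)).map T) :=
      Measure.isFiniteMeasure_map _ _
    have key : ∀ (s : Set (Fin p → ℝ)) (t : Set ((Fin q → ℝ) × ℝ)),
        MeasurableSet s → MeasurableSet t →
        ((μ.withDensity fun ω => ENNReal.ofReal (v₁ ω)).map T) (s ×ˢ t)
          = ((μ.withDensity fun ω => ENNReal.ofReal (v₂ ω)).map T) (s ×ˢ t) := by
      intro s t hs ht
      have hst : MeasurableSet (s ×ˢ t) := hs.prod ht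
      have hpre : T ⁻¹' (s ×ˢ t) = Lstar ⁻¹' s ∩ (fun ω => (L ω, Y ω)) ⁻¹' t := by
        rw [hT_def]; rfl
      rw [Measure.map_apply hT hst, Measure.map_apply hT hst,
        withDensity_apply _ (hT hst), withDensity_apply _ (hT hst), hpre]
      set E : Set Ω := Lstar ⁻¹' s ∩ (fun ω => (L ω, Y ω)) ⁻¹' t with hE_def
      have hE : MeasurableSet E := (hLstar hs).inter ((hL.prodMk hY) ht)
      have hv₁int : Integrable v₁ μ :=
        aux_bdd_integrable hv₁meas.aestronglyMeasurable (C := 1)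
          (ae_of_all _ fun ω => by rw [abs_of_nonneg (hv₁0 ω)]; exact hv₁le1 ω)
      have hv₂int : Integrable v₂ μ :=
        aux_bdd_integrable hv₂meas.aestronglyMeasurable (C := 1)
          (by filter_upwards [hv₂le1] with ω h; rw [abs_of_nonneg (hv₂0 ω)]; exact h)
      rw [← ofReal_integral_eq_lintegral_ofReal (hv₁int.restrict)
          (ae_restrict_of_ae (ae_of_all _ hv₁0)),
        ← ofReal_integral_eq_lintegral_ofReal (hv₂int.restrict)
          (ae_restrict_of_ae (ae_of_all _ hv₂0))]
      congr 1
      -- now a real-integral identity, proved via conditional expectations given m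
      set U : Set Ω := (fun ω => (Lstar ω, A ω)) ⁻¹' (s ×ˢ ({1} : Set ℝ)) with hU_def
      have hUm : MeasurableSet[MeasurableSpace.comap (fun ω => (Lstar ω, A ω)) inferInstance]
          U := by
        rw [hU_def]
        exact ⟨s ×ˢ ({1} : Set ℝ), hs.prod (measurableSet_singleton 1), rfl⟩
      have hU : MeasurableSet U := hm _ hUm
      set IU : Ω → ℝ := U.indicator (fun _ => 1) with hIU_def
      have hIUm : StronglyMeasurable[MeasurableSpace.comap (fun ω => (Lstar ω, A ω))
          inferInstance] IU := by
        rw [hIU_def]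
        exact stronglyMeasurable_const.indicator hUm
      have hIUmeas : Measurable IU := by
        rw [hIU_def]; exact measurable_const.indicator hU
      have hIUbd : ∀ ω, |IU ω| ≤ 1 := by
        intro ω
        rw [hIU_def]
        by_cases h : ω ∈ U <;> simp [Set.indicator_apply, h]
      set V : Set Ω := (fun ω => (L ω, Y ω)) ⁻¹' t with hV_def
      have hVmeas : MeasurableSet V := (hL.prodMk hY) ht
      set IV : Ω → ℝ := V.indicator (fun _ => 1) with hIV_def
      have hIVmeas : Measurable IV := by rw [hIV_def]; exact measurable_const.indicator hVmeas
      have hIVbd : ∀ ω, |IV ω| ≤ 1 := by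
        intro ω
        rw [hIV_def]
        by_cases h : ω ∈ V <;> simp [Set.indicator_apply, h]
      have hIVint : Integrable IV μ :=
        aux_bdd_integrable hIVmeas.aestronglyMeasurable (ae_of_all _ hIVbd)
      have hRbd : ∀ ω, |R ω| ≤ 1 := by
        intro ω; rcases hR01 ω with h | h <;> simp [h]
      have hRIVint : Integrable (fun ω => R ω * IV ω) μ :=
        aux_bdd_integrable (hR.mul hIVmeas).aestronglyMeasurable (C := 1)
          (ae_of_all _ fun ω => by
            simpa using aux_mul_bd (hRbd ω) (hIVbd ω))
      have hIURIVint : Integrable (fun ω => IU ω * (R ω * IV ω)) μ :=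
        aux_bdd_integrable (hIUmeas.mul (hR.mul hIVmeas)).aestronglyMeasurable (C := 1)
          (ae_of_all _ fun ω => by
            simpa using aux_mul_bd (hIUbd ω) (aux_mul_bd (hRbd ω) (hIVbd ω)))
      have hAofU : ∀ ω, ω ∈ U → A ω = 1 := by
        intro ω hω
        rw [hU_def] at hω
        exact hω.2
      have hφ₂m : StronglyMeasurable[MeasurableSpace.comap (fun ω => (Lstar ω, A ω))
          inferInstance] (fun ω => IU ω * φm (Lstar ω)) := by
        refine hIUm.mul ?_
        have : Measurable[MeasurableSpace.comap (fun ω => (Lstar ω, A ω)) inferInstance]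
            fun ω => φm (Lstar ω) :=
          (hφm.comp measurable_fst).comp (comap_measurable _)
        exact this.stronglyMeasurable
      have hIUφbd : ∀ᵐ ω ∂μ, |IU ω * φm (Lstar ω)| ≤ 1 := by
        filter_upwards [hRble] with ω h2
        by_cases h : ω ∈ U
        · have hA1 : A ω = 1 := hAofU ω h
          rw [hA1] at h2
          rw [hIU_def, Set.indicator_of_mem h, abs_mul, abs_one, one_mul, hφm_def,
            abs_of_nonneg (le_max_right _ _)]
          exact max_le h2 zero_le_one
        · rw [hIU_def, Set.indicator_of_notMem h]
          simp
      have hIUφint : Integrable (fun ω => IU ω * φm (Lstar ω)) μ :=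
        aux_bdd_integrable (hIUmeas.mul (hφm.comp hLstar)).aestronglyMeasurable hIUφbd
      have hIUφIVint : Integrable (fun ω => (IU ω * φm (Lstar ω)) * IV ω) μ :=
        aux_bdd_integrable ((hIUmeas.mul (hφm.comp hLstar)).mul hIVmeas).aestronglyMeasurable
          (C := 1) (by
            filter_upwards [hIUφbd] with ω h
            simpa using aux_mul_bd h (hIVbd ω))
      -- the conditional independence input
      have hMARkey := (condIndepFun_iff_condExp_inter_preimage_eq_mul hR (hL.prodMk hY)).mp
        hMAR ({1} : Set ℝ) t (measurableSet_singleton 1) ht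
      have eR : Set.indicator (R ⁻¹' ({1} : Set ℝ)) (fun _ => (1 : ℝ)) = R := by
        funext ω
        rcases hR01 ω with h | h <;> simp [Set.indicator_apply, h]
      have eRV : (fun ω => R ω * IV ω)
          = Set.indicator (R ⁻¹' ({1} : Set ℝ) ∩ (fun ω => (L ω, Y ω)) ⁻¹' t)
              (fun _ => (1 : ℝ)) := by
        funext ω
        rcases hR01 ω with h | h <;> by_cases h' : (L ω, Y ω) ∈ t <;>
          simp [hIV_def, hV_def, Set.indicator_apply, h, h']
      have hcond : μ[(fun ω => R ω * IV ω)|MeasurableSpace.comap (fun ω => (Lstar ω, A ω))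
            inferInstance]
          =ᵐ[μ] fun ω => η (Lstar ω) (A ω)
            * (μ[IV|MeasurableSpace.comap (fun ω => (Lstar ω, A ω)) inferInstance]) ω := by
        have h1 : μ[(fun ω => R ω * IV ω)|MeasurableSpace.comap (fun ω => (Lstar ω, A ω))
              inferInstance]
            =ᵐ[μ] fun ω => (μ[R|MeasurableSpace.comap (fun ω => (Lstar ω, A ω))
                inferInstance]) ω
              * (μ[IV|MeasurableSpace.comap (fun ω => (Lstar ω, A ω)) inferInstance]) ω := by
          have hk := hMARkey
          rw [eR] at hk
          rw [eRV]
          have eIV : IV = Set.indicator ((fun ω => (L ω, Y ω)) ⁻¹' t) (fun _ => (1 : ℝ)) := by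
            rw [hIV_def, hV_def]
          rw [eIV]
          exact hk
        refine h1.trans ?_
        filter_upwards [hηver] with ω e
        rw [← e]
      have pull1 : ∫ ω, IU ω * ((μ[(fun ω' => R ω' * IV ω')|MeasurableSpace.comap
            (fun ω => (Lstar ω, A ω)) inferInstance]) ω) ∂μ
          = ∫ ω, IU ω * (R ω * IV ω) ∂μ := aux_pull hm hIUm hIURIVint hRIVint
      have pull2 : ∫ ω, (IU ω * φm (Lstar ω)) * ((μ[IV|MeasurableSpace.comap
            (fun ω => (Lstar ω, A ω)) inferInstance]) ω) ∂μ
          = ∫ ω, (IU ω * φm (Lstar ω)) * IV ω ∂μ := aux_pull hm hφ₂m hIUφIVint hIVint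
      have step1 : ∫ ω in E, v₁ ω ∂μ = ∫ ω, IU ω * (R ω * IV ω) ∂μ := by
        rw [← integral_indicator hE]
        refine integral_congr_ae (ae_of_all _ fun ω => ?_)
        by_cases h1 : Lstar ω ∈ s <;> by_cases h2 : (L ω, Y ω) ∈ t <;>
          rcases hA01 ω with h3 | h3 <;> rcases hR01 ω with h4 | h4 <;>
          simp [hE_def, hU_def, hIU_def, hIV_def, hV_def, hv₁_def, Set.indicator_apply,
            Set.mem_prod, h1, h2, h3, h4]
      have habs : ∫ ω, IU ω * (η (Lstar ω) (A ω) * ((μ[IV|MeasurableSpace.comap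
            (fun ω => (Lstar ω, A ω)) inferInstance]) ω)) ∂μ
          = ∫ ω, (IU ω * φm (Lstar ω)) * ((μ[IV|MeasurableSpace.comap
            (fun ω => (Lstar ω, A ω)) inferInstance]) ω) ∂μ := by
        refine integral_congr_ae ?_
        filter_upwards [hη1] with ω hω
        by_cases h : ω ∈ U
        · have hA1 : A ω = 1 := hAofU ω h
          have hmax : φm (Lstar ω) = η (Lstar ω) (A ω) := by
            rw [hA1, hφm_def]
            exact max_eq_left (le_trans hε₀.le hω)
          rw [hmax]; ring
        · rw [hIU_def, Set.indicator_of_notMem h]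
          ring
      have final : ∫ ω, (IU ω * φm (Lstar ω)) * IV ω ∂μ = ∫ ω in E, v₂ ω ∂μ := by
        rw [← integral_indicator hE]
        refine integral_congr_ae (ae_of_all _ fun ω => ?_)
        by_cases h1 : Lstar ω ∈ s <;> by_cases h2 : (L ω, Y ω) ∈ t <;>
          rcases hA01 ω with h3 | h3 <;>
          simp [hE_def, hU_def, hIU_def, hIV_def, hV_def, hv₂_def, Set.indicator_apply,
            Set.mem_prod, h1, h2, h3]
      calc ∫ ω in E, v₁ ω ∂μ
          = ∫ ω, IU ω * (R ω * IV ω) ∂μ := step1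
        _ = ∫ ω, IU ω * ((μ[(fun ω' => R ω' * IV ω')|MeasurableSpace.comap
              (fun ω => (Lstar ω, A ω)) inferInstance]) ω) ∂μ := pull1.symm
        _ = ∫ ω, IU ω * (η (Lstar ω) (A ω) * ((μ[IV|MeasurableSpace.comap
              (fun ω => (Lstar ω, A ω)) inferInstance]) ω)) ∂μ := by
            refine integral_congr_ae ?_
            filter_upwards [hcond] with ω e
            rw [e]
        _ = ∫ ω, (IU ω * φm (Lstar ω)) * ((μ[IV|MeasurableSpace.comap
              (fun ω => (Lstar ω, A ω)) inferInstance]) ω) ∂μ := habs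
        _ = ∫ ω, (IU ω * φm (Lstar ω)) * IV ω ∂μ := pull2
        _ = ∫ ω in E, v₂ ω ∂μ := final
    refine ext_of_generate_finite _ generateFrom_prod.symm isPiSystem_prod ?_ ?_
    · rintro u ⟨s, hs, t, ht, rfl⟩
      exact key s t hs ht
    · have := key Set.univ Set.univ MeasurableSet.univ MeasurableSet.univ
      simpa [Set.univ_prod_univ] using this
  -- transfers between μ with weight v₁ and ν
  have hSchain : ∀ f : (Fin p → ℝ) × ((Fin q → ℝ) × ℝ) → ℝ,
      ∫ ω, v₁ ω * f (T ω) ∂μ = (μ S).toReal * ∫ ω, f (T ω) ∂ν := by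
    intro f
    have h1 : ∫ ω, v₁ ω * f (T ω) ∂μ = ∫ ω in S, f (T ω) ∂μ := by
      rw [← integral_indicator hSmeas]
      refine integral_congr_ae (ae_of_all _ fun ω => ?_)
      dsimp only
      rw [hv₁ind ω]
      by_cases h : ω ∈ S <;> simp [Set.indicator_apply, h]
    rw [h1, hSint]
  have hIntv₁ : ∀ f : (Fin p → ℝ) × ((Fin q → ℝ) × ℝ) → ℝ,
      Integrable (fun ω => f (T ω)) ν → Integrable (fun ω => v₁ ω * f (T ω)) μ := by
    intro f hfν
    have h2 : Integrable (S.indicator fun ω => f (T ω)) μ :=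
      (integrable_indicator_iff hSmeas).mpr ((hIntIff _).mp hfν)
    refine h2.congr (ae_of_all _ fun ω => ?_)
    dsimp only
    rw [hv₁ind ω]
    by_cases h : ω ∈ S <;> simp [Set.indicator_apply, h]
  -- strong measurability with respect to σ(L*, Y)
  have hhm' : StronglyMeasurable[MeasurableSpace.comap (fun ω => (Lstar ω, Y ω)) inferInstance]
      (fun ω => (η (Lstar ω) 1)⁻¹) :=
    (((hη1meas.comp measurable_fst).inv).comp
      (comap_measurable _)).stronglyMeasurable
  have hYhm' : StronglyMeasurable[MeasurableSpace.comap (fun ω => (Lstar ω, Y ω)) inferInstance]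
      (fun ω => Y ω * (η (Lstar ω) 1)⁻¹) :=
    ((measurable_snd.mul ((hη1meas.comp measurable_fst).inv)).comp
      (comap_measurable _)).stronglyMeasurable
  -- bounds and integrabilities under ν
  have hinv_bd : ∀ᵐ ω ∂ν, |(η (Lstar ω) 1)⁻¹| ≤ ε₀⁻¹ := by
    filter_upwards [hη1ν] with ω h
    rw [abs_of_nonneg (inv_nonneg.mpr (le_trans hε₀.le h))]
    exact inv_anti₀ hε₀ h
  have hgbd : ∀ ω, |g (L ω) (A ω)| ≤ 1 := by
    intro ω; rcases hg01 (L ω) (A ω) with h | h <;> simp [h]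
  have hXint : Integrable (fun ω => g (L ω) (A ω)) ν :=
    aux_bdd_integrable hXmeas.aestronglyMeasurable (ae_of_all _ hgbd)
  have hYintν : Integrable Y ν := (hIntIff Y).mpr ((hY2.integrable one_le_two).restrict)
  have hμ₀intν : Integrable (fun ω => μ₀ (Lstar ω) (L ω)) ν :=
    (hIntIff _).mpr ((hμ₀2.integrable one_le_two).restrict)
  have hX'int : Integrable (fun ω => g (L ω) (A ω) * μ₀ (Lstar ω) (L ω)) ν := by
    refine Integrable.mono' hμ₀intν.abs (hXmeas.mul hμ₀meas).aestronglyMeasurable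
      (ae_of_all _ fun ω => ?_)
    rw [Real.norm_eq_abs]
    simpa using aux_mul_bd (hgbd ω) (le_refl |μ₀ (Lstar ω) (L ω)|)
  have hε₁bd : ∀ᵐ ω ∂ν, |ε₁f (Lstar ω) (Y ω)| ≤ 1 := by
    have h0 : 0 ≤ᵐ[ν] ν[(fun ω => g (L ω) (A ω))|MeasurableSpace.comap
        (fun ω => (Lstar ω, Y ω)) inferInstance] :=
      condExp_nonneg (ae_of_all _ fun ω => by rcases hg01 (L ω) (A ω) with h | h <;> simp [h])
    have h1 : ν[(fun ω => g (L ω) (A ω))|MeasurableSpace.comap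
        (fun ω => (Lstar ω, Y ω)) inferInstance] ≤ᵐ[ν] fun _ => (1 : ℝ) := by
      have := condExp_mono
        (m := MeasurableSpace.comap (fun ω => (Lstar ω, Y ω)) inferInstance)
        hXint (integrable_const (1 : ℝ))
        (ae_of_all _ fun ω => by rcases hg01 (L ω) (A ω) with h | h <;> simp [h])
      rwa [condExp_const hm'] at this
    filter_upwards [hε₁ver, h0, h1] with ω e a b
    simp only [Pi.zero_apply] at a
    rw [e, abs_le]
    exact ⟨by linarith, b⟩
  -- the conditional-expectation identities under ν
  have cond1 : ∫ ω, ε₁f (Lstar ω) (Y ω) * (η (Lstar ω) 1)⁻¹ ∂ν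
      = ∫ ω, g (L ω) (A ω) * (η (Lstar ω) 1)⁻¹ ∂ν := by
    have hint1 : Integrable (fun ω => (η (Lstar ω) 1)⁻¹ * g (L ω) (A ω)) ν :=
      aux_bdd_integrable ((hη1meas.comp hLstar).inv.mul hXmeas).aestronglyMeasurable
        (C := ε₀⁻¹) (by
          filter_upwards [hinv_bd] with ω h
          simpa using aux_mul_bd h (hgbd ω))
    calc ∫ ω, ε₁f (Lstar ω) (Y ω) * (η (Lstar ω) 1)⁻¹ ∂ν
        = ∫ ω, (η (Lstar ω) 1)⁻¹ * ((ν[(fun ω => g (L ω) (A ω))|MeasurableSpace.comap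
            (fun ω => (Lstar ω, Y ω)) inferInstance]) ω) ∂ν := by
          refine integral_congr_ae ?_
          filter_upwards [hε₁ver] with ω e
          rw [e, mul_comm]
      _ = ∫ ω, (η (Lstar ω) 1)⁻¹ * g (L ω) (A ω) ∂ν := aux_pull hm' hhm' hint1 hXint
      _ = ∫ ω, g (L ω) (A ω) * (η (Lstar ω) 1)⁻¹ ∂ν :=
          integral_congr_ae (ae_of_all _ fun ω => mul_comm _ _)
  have cond2 : ∫ ω, ε₁f (Lstar ω) (Y ω) * (Y ω * (η (Lstar ω) 1)⁻¹) ∂ν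
      = ∫ ω, g (L ω) (A ω) * (Y ω * (η (Lstar ω) 1)⁻¹) ∂ν := by
    have hint2 : Integrable (fun ω => (Y ω * (η (Lstar ω) 1)⁻¹) * g (L ω) (A ω)) ν := by
      refine Integrable.mono' (hYintν.abs.const_mul ε₀⁻¹)
        ((hY.mul (hη1meas.comp hLstar).inv).mul hXmeas).aestronglyMeasurable ?_
      filter_upwards [hinv_bd] with ω h
      rw [Real.norm_eq_abs]
      have := aux_mul_bd (aux_mul_bd (le_refl |Y ω|) h) (hgbd ω)
      calc |Y ω * (η (Lstar ω) 1)⁻¹ * g (L ω) (A ω)| ≤ |Y ω| * ε₀⁻¹ * 1 := this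
        _ = ε₀⁻¹ * |Y ω| := by ring
    calc ∫ ω, ε₁f (Lstar ω) (Y ω) * (Y ω * (η (Lstar ω) 1)⁻¹) ∂ν
        = ∫ ω, (Y ω * (η (Lstar ω) 1)⁻¹) * ((ν[(fun ω => g (L ω) (A ω))|MeasurableSpace.comap
            (fun ω => (Lstar ω, Y ω)) inferInstance]) ω) ∂ν := by
          refine integral_congr_ae ?_
          filter_upwards [hε₁ver] with ω e
          rw [e, mul_comm]
      _ = ∫ ω, (Y ω * (η (Lstar ω) 1)⁻¹) * g (L ω) (A ω) ∂ν := aux_pull hm' hYhm' hint2 hXint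
      _ = ∫ ω, g (L ω) (A ω) * (Y ω * (η (Lstar ω) 1)⁻¹) ∂ν :=
          integral_congr_ae (ae_of_all _ fun ω => mul_comm _ _)
  have cond3 : ∫ ω, ξ (Lstar ω) (Y ω) * (η (Lstar ω) 1)⁻¹ ∂ν
      = ∫ ω, (g (L ω) (A ω) * μ₀ (Lstar ω) (L ω)) * (η (Lstar ω) 1)⁻¹ ∂ν := by
    have hint3 : Integrable (fun ω => (η (Lstar ω) 1)⁻¹
        * (g (L ω) (A ω) * μ₀ (Lstar ω) (L ω))) ν := by
      refine Integrable.mono' (hμ₀intν.abs.const_mul ε₀⁻¹)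
        ((hη1meas.comp hLstar).inv.mul (hXmeas.mul hμ₀meas)).aestronglyMeasurable ?_
      filter_upwards [hinv_bd] with ω h
      rw [Real.norm_eq_abs]
      have := aux_mul_bd h (aux_mul_bd (hgbd ω) (le_refl |μ₀ (Lstar ω) (L ω)|))
      calc |(η (Lstar ω) 1)⁻¹ * (g (L ω) (A ω) * μ₀ (Lstar ω) (L ω))|
          ≤ ε₀⁻¹ * (1 * |μ₀ (Lstar ω) (L ω)|) := this
        _ = ε₀⁻¹ * |μ₀ (Lstar ω) (L ω)| := by ring
    calc ∫ ω, ξ (Lstar ω) (Y ω) * (η (Lstar ω) 1)⁻¹ ∂ν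
        = ∫ ω, (η (Lstar ω) 1)⁻¹ * ((ν[(fun ω => g (L ω) (A ω) * μ₀ (Lstar ω) (L ω))|
            MeasurableSpace.comap (fun ω => (Lstar ω, Y ω)) inferInstance]) ω) ∂ν := by
          refine integral_congr_ae ?_
          filter_upwards [hξver] with ω e
          rw [e, mul_comm]
      _ = ∫ ω, (η (Lstar ω) 1)⁻¹ * (g (L ω) (A ω) * μ₀ (Lstar ω) (L ω)) ∂ν :=
          aux_pull hm' hhm' hint3 hX'int
      _ = ∫ ω, (g (L ω) (A ω) * μ₀ (Lstar ω) (L ω)) * (η (Lstar ω) 1)⁻¹ ∂ν :=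
          integral_congr_ae (ae_of_all _ fun ω => mul_comm _ _)
  -- remaining integrabilities under ν
  have hε₁hint : Integrable (fun ω => ε₁f (Lstar ω) (Y ω) * (η (Lstar ω) 1)⁻¹) ν :=
    aux_bdd_integrable (hε₁meas.mul (hη1meas.comp hLstar).inv).aestronglyMeasurable
      (C := ε₀⁻¹) (by
        filter_upwards [hε₁bd, hinv_bd] with ω h1 h2
        simpa using aux_mul_bd h1 h2)
  have hε₁Yint : Integrable (fun ω => ε₁f (Lstar ω) (Y ω) * (Y ω * (η (Lstar ω) 1)⁻¹)) ν := by
    refine Integrable.mono' (hYintν.abs.const_mul ε₀⁻¹)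
      (hε₁meas.mul (hY.mul (hη1meas.comp hLstar).inv)).aestronglyMeasurable ?_
    filter_upwards [hε₁bd, hinv_bd] with ω h1 h2
    rw [Real.norm_eq_abs]
    have := aux_mul_bd h1 (aux_mul_bd (le_refl |Y ω|) h2)
    calc |ε₁f (Lstar ω) (Y ω) * (Y ω * (η (Lstar ω) 1)⁻¹)| ≤ 1 * (|Y ω| * ε₀⁻¹) := this
      _ = ε₀⁻¹ * |Y ω| := by ring
  have hξhint : Integrable (fun ω => ξ (Lstar ω) (Y ω) * (η (Lstar ω) 1)⁻¹) ν := by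
    refine Integrable.mono'
      ((integrable_condExp (m := MeasurableSpace.comap (fun ω => (Lstar ω, Y ω)) inferInstance)
        (f := fun ω => g (L ω) (A ω) * μ₀ (Lstar ω) (L ω)) (μ := ν)).abs.const_mul ε₀⁻¹)
      (hξmeas.mul (hη1meas.comp hLstar).inv).aestronglyMeasurable ?_
    filter_upwards [hξver, hinv_bd] with ω e h2
    rw [Real.norm_eq_abs, e]
    have := aux_mul_bd (le_refl |(ν[(fun ω => g (L ω) (A ω) * μ₀ (Lstar ω) (L ω))|
      MeasurableSpace.comap (fun ω => (Lstar ω, Y ω)) inferInstance]) ω|) h2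
    calc |(ν[(fun ω => g (L ω) (A ω) * μ₀ (Lstar ω) (L ω))|MeasurableSpace.comap
          (fun ω => (Lstar ω, Y ω)) inferInstance]) ω * (η (Lstar ω) 1)⁻¹|
        ≤ |(ν[(fun ω => g (L ω) (A ω) * μ₀ (Lstar ω) (L ω))|MeasurableSpace.comap
          (fun ω => (Lstar ω, Y ω)) inferInstance]) ω| * ε₀⁻¹ := this
      _ = ε₀⁻¹ * |(ν[(fun ω => g (L ω) (A ω) * μ₀ (Lstar ω) (L ω))|MeasurableSpace.comap
          (fun ω => (Lstar ω, Y ω)) inferInstance]) ω| := by ring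
  have hXYint : Integrable (fun ω => g (L ω) (A ω) * (Y ω * (η (Lstar ω) 1)⁻¹)) ν := by
    refine Integrable.mono' (hYintν.abs.const_mul ε₀⁻¹)
      (hXmeas.mul (hY.mul (hη1meas.comp hLstar).inv)).aestronglyMeasurable ?_
    filter_upwards [hinv_bd] with ω h2
    rw [Real.norm_eq_abs]
    have := aux_mul_bd (hgbd ω) (aux_mul_bd (le_refl |Y ω|) h2)
    calc |g (L ω) (A ω) * (Y ω * (η (Lstar ω) 1)⁻¹)| ≤ 1 * (|Y ω| * ε₀⁻¹) := this
      _ = ε₀⁻¹ * |Y ω| := by ring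
  have hX'hint : Integrable (fun ω => (g (L ω) (A ω) * μ₀ (Lstar ω) (L ω))
      * (η (Lstar ω) 1)⁻¹) ν := by
    refine Integrable.mono' (hμ₀intν.abs.const_mul ε₀⁻¹)
      ((hXmeas.mul hμ₀meas).mul (hη1meas.comp hLstar).inv).aestronglyMeasurable ?_
    filter_upwards [hinv_bd] with ω h2
    rw [Real.norm_eq_abs]
    have := aux_mul_bd (aux_mul_bd (hgbd ω) (le_refl |μ₀ (Lstar ω) (L ω)|)) h2
    calc |g (L ω) (A ω) * μ₀ (Lstar ω) (L ω) * (η (Lstar ω) 1)⁻¹|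
        ≤ 1 * |μ₀ (Lstar ω) (L ω)| * ε₀⁻¹ := this
      _ = ε₀⁻¹ * |μ₀ (Lstar ω) (L ω)| := by ring
  constructor
  · -- first identity
    have hf₂meas : Measurable (fun z : (Fin p → ℝ) × ((Fin q → ℝ) × ℝ)
        => ε₁f z.1 z.2.2 * (η z.1 1)⁻¹) :=
      (hε₁f.comp (measurable_fst.prodMk (measurable_snd.comp measurable_snd))).mul
        ((hη1meas.comp measurable_fst).inv)
    have i1 : Integrable (fun ω => (fun z : (Fin p → ℝ) × ((Fin q → ℝ) × ℝ)
        => ε₁f z.1 z.2.2 * (η z.1 1)⁻¹) (T ω)) ν := by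
      simp only [hT_def]
      exact hε₁hint
    have i2 := hIntv₁ (fun z => ε₁f z.1 z.2.2 * (η z.1 1)⁻¹) i1
    have key2 := aux_integral_weight hT hv₁meas hv₂meas hv₁0 hv₂0 hmap hf₂meas i2
    calc ∫ ω, A ω * R ω * g (L ω) (A ω) / η (Lstar ω) 1 ∂μ
        = ∫ ω, v₁ ω * (fun z : (Fin p → ℝ) × ((Fin q → ℝ) × ℝ)
            => g z.2.1 1 * (η z.1 1)⁻¹) (T ω) ∂μ := by
          refine integral_congr_ae (ae_of_all _ fun ω => ?_)
          rcases hA01 ω with h | h <;> rcases hR01 ω with h' | h' <;>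
            simp [hv₁_def, hT_def, h, h', div_eq_mul_inv] <;> ring
      _ = (μ S).toReal * ∫ ω, (fun z : (Fin p → ℝ) × ((Fin q → ℝ) × ℝ)
            => g z.2.1 1 * (η z.1 1)⁻¹) (T ω) ∂ν :=
          hSchain (fun z => g z.2.1 1 * (η z.1 1)⁻¹)
      _ = (μ S).toReal * ∫ ω, ε₁f (Lstar ω) (Y ω) * (η (Lstar ω) 1)⁻¹ ∂ν := by
          congr 1
          have e1 : ∫ ω, (fun z : (Fin p → ℝ) × ((Fin q → ℝ) × ℝ)
              => g z.2.1 1 * (η z.1 1)⁻¹) (T ω) ∂ν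
              = ∫ ω, g (L ω) (A ω) * (η (Lstar ω) 1)⁻¹ ∂ν := by
            refine integral_congr_ae ?_
            filter_upwards [haeS] with ω h
            simp only [hT_def, h.1]
          rw [e1, ← cond1]
      _ = ∫ ω, v₁ ω * (fun z : (Fin p → ℝ) × ((Fin q → ℝ) × ℝ)
            => ε₁f z.1 z.2.2 * (η z.1 1)⁻¹) (T ω) ∂μ :=
          (hSchain (fun z => ε₁f z.1 z.2.2 * (η z.1 1)⁻¹)).symm
      _ = ∫ ω, v₂ ω * (fun z : (Fin p → ℝ) × ((Fin q → ℝ) × ℝ)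
            => ε₁f z.1 z.2.2 * (η z.1 1)⁻¹) (T ω) ∂μ := key2.2
      _ = ∫ ω, A ω * ε₁f (Lstar ω) (Y ω) ∂μ := by
          refine integral_congr_ae ?_
          filter_upwards [hη1] with ω hω
          rcases hA01 ω with h | h
          · simp [hv₂_def, hT_def, h]
          · have hne : η (Lstar ω) 1 ≠ 0 := (lt_of_lt_of_le hε₀ hω).ne'
            simp only [hv₂_def, hT_def, hφm_def]
            rw [if_pos h, h, max_eq_left (le_trans hε₀.le hω)]
            field_simp
  · -- second identity
    have hf₄meas : Measurable (fun z : (Fin p → ℝ) × ((Fin q → ℝ) × ℝ)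
        => (ε₁f z.1 z.2.2 * z.2.2 - ξ z.1 z.2.2) * (η z.1 1)⁻¹) :=
      (((hε₁f.comp (measurable_fst.prodMk (measurable_snd.comp measurable_snd))).mul
        (measurable_snd.comp measurable_snd)).sub
        (hξ.comp (measurable_fst.prodMk (measurable_snd.comp measurable_snd)))).mul
        ((hη1meas.comp measurable_fst).inv)
    have i1 : Integrable (fun ω => (fun z : (Fin p → ℝ) × ((Fin q → ℝ) × ℝ)
        => (ε₁f z.1 z.2.2 * z.2.2 - ξ z.1 z.2.2) * (η z.1 1)⁻¹) (T ω)) ν := by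
      simp only [hT_def]
      refine (hε₁Yint.sub hξhint).congr (ae_of_all _ fun ω => ?_)
      simp only [Pi.sub_apply]
      ring
    have i2 := hIntv₁ (fun z => (ε₁f z.1 z.2.2 * z.2.2 - ξ z.1 z.2.2) * (η z.1 1)⁻¹) i1
    have key2 := aux_integral_weight hT hv₁meas hv₂meas hv₁0 hv₂0 hmap hf₄meas i2
    have cond4 : ∫ ω, (ε₁f (Lstar ω) (Y ω) * Y ω - ξ (Lstar ω) (Y ω)) * (η (Lstar ω) 1)⁻¹ ∂ν
        = ∫ ω, (g (L ω) (A ω) * (Y ω - μ₀ (Lstar ω) (L ω))) * (η (Lstar ω) 1)⁻¹ ∂ν := by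
      have l1 : ∫ ω, (ε₁f (Lstar ω) (Y ω) * Y ω - ξ (Lstar ω) (Y ω)) * (η (Lstar ω) 1)⁻¹ ∂ν
          = ∫ ω, ε₁f (Lstar ω) (Y ω) * (Y ω * (η (Lstar ω) 1)⁻¹) ∂ν
            - ∫ ω, ξ (Lstar ω) (Y ω) * (η (Lstar ω) 1)⁻¹ ∂ν := by
        rw [← integral_sub hε₁Yint hξhint]
        refine integral_congr_ae (ae_of_all _ fun ω => ?_)
        ring
      have r1 : ∫ ω, (g (L ω) (A ω) * (Y ω - μ₀ (Lstar ω) (L ω))) * (η (Lstar ω) 1)⁻¹ ∂ν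
          = ∫ ω, g (L ω) (A ω) * (Y ω * (η (Lstar ω) 1)⁻¹) ∂ν
            - ∫ ω, (g (L ω) (A ω) * μ₀ (Lstar ω) (L ω)) * (η (Lstar ω) 1)⁻¹ ∂ν := by
        rw [← integral_sub hXYint hX'hint]
        refine integral_congr_ae (ae_of_all _ fun ω => ?_)
        ring
      rw [l1, r1, cond2, cond3]
    calc ∫ ω, (A ω * R ω * g (L ω) (A ω) / η (Lstar ω) 1) * (Y ω - μ₀ (Lstar ω) (L ω)) ∂μ
        = ∫ ω, v₁ ω * (fun z : (Fin p → ℝ) × ((Fin q → ℝ) × ℝ)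
            => (g z.2.1 1 * (z.2.2 - μ₀ z.1 z.2.1)) * (η z.1 1)⁻¹) (T ω) ∂μ := by
          refine integral_congr_ae (ae_of_all _ fun ω => ?_)
          rcases hA01 ω with h | h <;> rcases hR01 ω with h' | h' <;>
            simp [hv₁_def, hT_def, h, h', div_eq_mul_inv] <;> ring
      _ = (μ S).toReal * ∫ ω, (fun z : (Fin p → ℝ) × ((Fin q → ℝ) × ℝ)
            => (g z.2.1 1 * (z.2.2 - μ₀ z.1 z.2.1)) * (η z.1 1)⁻¹) (T ω) ∂ν :=
          hSchain (fun z => (g z.2.1 1 * (z.2.2 - μ₀ z.1 z.2.1)) * (η z.1 1)⁻¹)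
      _ = (μ S).toReal * ∫ ω, (ε₁f (Lstar ω) (Y ω) * Y ω - ξ (Lstar ω) (Y ω))
            * (η (Lstar ω) 1)⁻¹ ∂ν := by
          congr 1
          have e1 : ∫ ω, (fun z : (Fin p → ℝ) × ((Fin q → ℝ) × ℝ)
              => (g z.2.1 1 * (z.2.2 - μ₀ z.1 z.2.1)) * (η z.1 1)⁻¹) (T ω) ∂ν
              = ∫ ω, (g (L ω) (A ω) * (Y ω - μ₀ (Lstar ω) (L ω))) * (η (Lstar ω) 1)⁻¹ ∂ν := by
            refine integral_congr_ae ?_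
            filter_upwards [haeS] with ω h
            simp only [hT_def, h.1]
          rw [e1, ← cond4]
      _ = ∫ ω, v₁ ω * (fun z : (Fin p → ℝ) × ((Fin q → ℝ) × ℝ)
            => (ε₁f z.1 z.2.2 * z.2.2 - ξ z.1 z.2.2) * (η z.1 1)⁻¹) (T ω) ∂μ :=
          (hSchain (fun z => (ε₁f z.1 z.2.2 * z.2.2 - ξ z.1 z.2.2) * (η z.1 1)⁻¹)).symm
      _ = ∫ ω, v₂ ω * (fun z : (Fin p → ℝ) × ((Fin q → ℝ) × ℝ)
            => (ε₁f z.1 z.2.2 * z.2.2 - ξ z.1 z.2.2) * (η z.1 1)⁻¹) (T ω) ∂μ := key2.2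
      _ = ∫ ω, A ω * (ε₁f (Lstar ω) (Y ω) * Y ω - ξ (Lstar ω) (Y ω)) ∂μ := by
          refine integral_congr_ae ?_
          filter_upwards [hη1] with ω hω
          rcases hA01 ω with h | h
          · simp [hv₂_def, hT_def, h]
          · have hne : η (Lstar ω) 1 ≠ 0 := (lt_of_lt_of_le hε₀ hω).ne'
            simp only [hv₂_def, hT_def, hφm_def]
            rw [if_pos h, h, max_eq_left (le_trans hε₀.le hω)]
            field_simp
            try ring
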